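/- For δ > 0, α > 0, let L_D be the Laplacian on (0,δ) with Robin condition −u'(0) = αu(0) at 0 and Dirichlet condition u(δ) = 0. Then as αδ → +∞, the first eigenvalue satisfies E₁(L_D) = −α²(1 + O(e^{−δα})), and the second eigenvalue satisfies E₂(L_D) ≥ 0. -/

import Mathlib

open MeasureTheory

/-- The Rayleigh quotient of the form. -/
noncomputable def rq (δ α : ℝ) (f : ℝ → ℝ) : ℝ :=
  ((∫ t in Set.Ioo (0:ℝ) δ, (deriv f t) ^ 2) - α * (f 0) ^ 2) /
    (∫ t in Set.Ioo (0:ℝ) δ, (f t) ^ 2)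

/-- The set of min-max candidate values. -/
noncomputable def Sset (δ α : ℝ) (n : ℕ) : Set ℝ :=
  {v : ℝ | ∃ G : Submodule ℝ (ℝ → ℝ),
    (∀ f ∈ G, ContDiff ℝ 1 f ∧ f δ = 0) ∧ Module.finrank ℝ ↥G = n ∧
    v = sSup (rq δ α '' {f | f ∈ G ∧ f ≠ 0})}

/-- `n`-th min-max value (eigenvalue) of the Laplacian on `(0,δ)` with `α`-Robin
condition at `0` and Dirichlet condition at `δ`, defined via the quadratic form
`f ↦ ∫₀^δ (f')² − α f(0)²` on the (dense subspace of `C¹` functions of the) form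
domain `{f ∈ H¹(0,δ) : f(δ) = 0}`. -/
noncomputable def LDev (δ α : ℝ) (n : ℕ) : ℝ :=
  sInf {v : ℝ | ∃ G : Submodule ℝ (ℝ → ℝ),
    (∀ f ∈ G, ContDiff ℝ 1 f ∧ f δ = 0) ∧ Module.finrank ℝ ↥G = n ∧
    v = sSup ((fun f : ℝ → ℝ =>
        ((∫ t in Set.Ioo (0:ℝ) δ, (deriv f t) ^ 2) - α * (f 0) ^ 2) /
          (∫ t in Set.Ioo (0:ℝ) δ, (f t) ^ 2)) '' {f | f ∈ G ∧ f ≠ 0})}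

theorem LDev_eq (δ α : ℝ) (n : ℕ) : LDev δ α n = sInf (Sset δ α n) := rfl

lemma ioo_eq_interval (δ : ℝ) (hδ : 0 < δ) (g : ℝ → ℝ) :
    ∫ t in Set.Ioo (0:ℝ) δ, g t = ∫ t in (0:ℝ)..δ, g t := by
  rw [intervalIntegral.integral_of_le hδ.le, MeasureTheory.integral_Ioc_eq_integral_Ioo]

lemma formBound {δ α : ℝ} (hδ : 0 < δ) {f : ℝ → ℝ}
    (hf : ContDiff ℝ 1 f) (hfδ : f δ = 0) :
    α * (f 0) ^ 2 ≤ (∫ t in Set.Ioo (0:ℝ) δ, (deriv f t) ^ 2)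
      + α ^ 2 * ∫ t in Set.Ioo (0:ℝ) δ, (f t) ^ 2 := by
  have hdf : Differentiable ℝ f := hf.differentiable one_ne_zero
  have hf' : Continuous (deriv f) := hf.continuous_deriv le_rfl
  have hfc : Continuous f := hf.continuous
  have key : ∫ t in (0:ℝ)..δ, (2 * f t * deriv f t) = f δ ^ 2 - f 0 ^ 2 := by
    apply intervalIntegral.integral_eq_sub_of_hasDerivAt
    · intro x _
      have := ((hdf x).hasDerivAt).pow 2
      simpa [Pi.pow_def] using this
    · exact ((continuous_const.mul hfc).mul hf').intervalIntegrable _ _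
  have key2 : α * (f 0) ^ 2 = ∫ t in (0:ℝ)..δ, (-α) * (2 * f t * deriv f t) := by
    rw [intervalIntegral.integral_const_mul, key, hfδ]
    ring
  have mono : ∫ t in (0:ℝ)..δ, (-α) * (2 * f t * deriv f t)
      ≤ ∫ t in (0:ℝ)..δ, ((deriv f t) ^ 2 + α ^ 2 * (f t) ^ 2) := by
    apply intervalIntegral.integral_mono_on hδ.le
    · exact (continuous_const.mul ((continuous_const.mul hfc).mul hf')).intervalIntegrable _ _
    · exact ((hf'.pow 2).add (continuous_const.mul (hfc.pow 2))).intervalIntegrable _ _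
    · intro x _
      nlinarith [sq_nonneg (deriv f x + α * f x)]
  have split : ∫ t in (0:ℝ)..δ, ((deriv f t) ^ 2 + α ^ 2 * (f t) ^ 2)
      = (∫ t in (0:ℝ)..δ, (deriv f t) ^ 2) + α ^ 2 * ∫ t in (0:ℝ)..δ, (f t) ^ 2 := by
    rw [intervalIntegral.integral_add (f := fun t => (deriv f t) ^ 2) (g := fun t => α ^ 2 * (f t) ^ 2) ((hf'.pow 2).intervalIntegrable _ _)
      ((continuous_const.mul (hfc.pow 2)).intervalIntegrable _ _),
      intervalIntegral.integral_const_mul]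
  rw [ioo_eq_interval δ hδ, ioo_eq_interval δ hδ, key2]
  rw [split] at mono
  exact mono

lemma rq_lb {δ α : ℝ} (hδ : 0 < δ) {f : ℝ → ℝ}
    (hf : ContDiff ℝ 1 f) (hfδ : f δ = 0) : -α ^ 2 ≤ rq δ α f := by
  set B := ∫ t in Set.Ioo (0:ℝ) δ, (f t) ^ 2 with hB
  have hB0 : 0 ≤ B := integral_nonneg fun t => sq_nonneg _
  rcases eq_or_lt_of_le hB0 with h | h
  · simp only [rq, ← hB, ← h, div_zero]
    nlinarith
  · rw [rq, ← hB, le_div_iff₀ h]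
    have := formBound (α := α) hδ hf hfδ
    nlinarith

lemma rq_nonneg {δ α : ℝ} {f : ℝ → ℝ} (hf0 : f 0 = 0) : 0 ≤ rq δ α f := by
  rw [rq, hf0]
  apply div_nonneg _ (integral_nonneg fun t => sq_nonneg _)
  simpa using integral_nonneg (μ := volume.restrict (Set.Ioo 0 δ))
    (fun t => sq_nonneg (deriv f t))

lemma le_sSup_of_forall {s : Set ℝ} {c : ℝ} (hc : c ≤ 0) (h : ∀ y ∈ s, c ≤ y) :
    c ≤ sSup s := by
  rcases s.eq_empty_or_nonempty with rfl | ⟨y, hy⟩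
  · simpa [Real.sSup_empty] using hc
  · by_cases hbdd : BddAbove s
    · exact le_trans (h y hy) (le_csSup hbdd hy)
    · rw [Real.sSup_of_not_bddAbove hbdd]; exact hc

lemma nonneg_sSup {s : Set ℝ} {y : ℝ} (hy : y ∈ s) (h0 : 0 ≤ y) : 0 ≤ sSup s := by
  by_cases hbdd : BddAbove s
  · exact le_trans h0 (le_csSup hbdd hy)
  · rw [Real.sSup_of_not_bddAbove hbdd]

lemma Sset_lb {δ α : ℝ} (hδ : 0 < δ) {n : ℕ} {v : ℝ} (hv : v ∈ Sset δ α n) :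
    -α ^ 2 ≤ v := by
  obtain ⟨G, hG, _, rfl⟩ := hv
  apply le_sSup_of_forall (neg_nonpos.mpr (sq_nonneg α))
  rintro y ⟨f, ⟨hfG, -⟩, rfl⟩
  exact rq_lb hδ (hG f hfG).1 (hG f hfG).2

lemma exists_zero_at (G : Submodule ℝ (ℝ → ℝ)) (hrank : Module.finrank ℝ ↥G = 2) :
    ∃ f ∈ G, f ≠ 0 ∧ f 0 = 0 := by
  have : Module.Finite ℝ ↥G := Module.finite_of_finrank_eq_succ hrank
  set φ : ↥G →ₗ[ℝ] ℝ := (LinearMap.proj (0:ℝ)).comp G.subtype with hφ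
  have hker : LinearMap.ker φ ≠ ⊥ := by
    intro h
    have hinj : Function.Injective φ := LinearMap.ker_eq_bot.mp h
    have := LinearMap.finrank_le_finrank_of_injective hinj
    rw [hrank, Module.finrank_self] at this
    omega
  obtain ⟨g, hg, hg0⟩ := (Submodule.ne_bot_iff _).mp hker
  refine ⟨(g : ℝ → ℝ), g.2, ?_, ?_⟩
  · simpa [Submodule.coe_eq_zero] using hg0
  · simpa [hφ] using hg

lemma Sset2_nonneg {δ α : ℝ} {v : ℝ} (hv : v ∈ Sset δ α 2) : 0 ≤ v := by
  obtain ⟨G, hG, hrank, rfl⟩ := hv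
  obtain ⟨f, hfG, hfne, hf0⟩ := exists_zero_at G hrank
  exact nonneg_sSup ⟨f, ⟨hfG, hfne⟩, rfl⟩ (rq_nonneg hf0)

lemma rq_smul (δ α : ℝ) {c : ℝ} (hc : c ≠ 0) {f : ℝ → ℝ} (hf : ContDiff ℝ 1 f) :
    rq δ α (c • f) = rq δ α f := by
  have hdf : Differentiable ℝ f := hf.differentiable one_ne_zero
  have hcf : (c • f) = fun t => c * f t := by funext t; simp
  have hd : ∀ t, deriv (c • f) t = c * deriv f t := by
    intro t
    rw [hcf, deriv_const_mul c (hdf t)]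
  simp only [rq, hd]
  rw [hcf]
  simp only [mul_pow]
  rw [MeasureTheory.integral_const_mul, MeasureTheory.integral_const_mul]
  rw [show c ^ 2 * (∫ t in Set.Ioo (0:ℝ) δ, (deriv f t) ^ 2) - α * (c ^ 2 * f 0 ^ 2)
    = c ^ 2 * ((∫ t in Set.Ioo (0:ℝ) δ, (deriv f t) ^ 2) - α * f 0 ^ 2) by ring]
  exact mul_div_mul_left _ _ (pow_ne_zero 2 hc)

section test
variable {δ α : ℝ}

lemma hasDerivAt_inner (δ α t : ℝ) : HasDerivAt (fun t => α * (δ - t)) (-α) t := by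
  simpa using ((hasDerivAt_id t).const_sub δ).const_mul α

lemma testfun_hasDeriv (δ α t : ℝ) :
    HasDerivAt (fun t => Real.sinh (α * (δ - t))) (-(α * Real.cosh (α * (δ - t)))) t := by
  have := (Real.hasDerivAt_sinh (α * (δ - t))).comp t (hasDerivAt_inner δ α t)
  simpa [mul_comm, Function.comp_def] using this

lemma testfun_deriv (δ α : ℝ) :
    deriv (fun t => Real.sinh (α * (δ - t))) = fun t => -(α * Real.cosh (α * (δ - t))) := by
  funext t; exact (testfun_hasDeriv δ α t).deriv

lemma testfun_contDiff (δ α : ℝ) : ContDiff ℝ 1 (fun t => Real.sinh (α * (δ - t))) :=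
  (Real.contDiff_sinh.of_le le_top).comp (contDiff_const.mul (contDiff_const.sub contDiff_id))

lemma coshDeriv (δ α t : ℝ) :
    HasDerivAt (fun t => Real.cosh (α * (δ - t))) (Real.sinh (α * (δ - t)) * (-α)) t :=
  by have := (Real.hasDerivAt_cosh (α * (δ - t))).comp t (hasDerivAt_inner δ α t); exact this

lemma IB (hδ : 0 < δ) (hα : 0 < α) :
    ∫ t in Set.Ioo (0:ℝ) δ, (Real.sinh (α * (δ - t))) ^ 2
      = (Real.sinh (α * δ) * Real.cosh (α * δ) - α * δ) / (2 * α) := by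
  rw [ioo_eq_interval δ hδ]
  have h : ∀ t ∈ Set.uIcc (0:ℝ) δ, HasDerivAt
      (fun t => (α * (δ - t) - Real.sinh (α * (δ - t)) * Real.cosh (α * (δ - t))) / (2 * α))
      ((Real.sinh (α * (δ - t))) ^ 2) t := by
    intro t _
    have h1 := hasDerivAt_inner δ α t
    have h2 := (testfun_hasDeriv δ α t).mul (coshDeriv δ α t)
    have h3 := (h1.sub h2).div_const (2 * α)
    refine h3.congr_deriv ?_
    have hc := Real.cosh_sq (α * (δ - t))
    field_simp
    nlinarith [hc]
  have hint : IntervalIntegrable (fun t => (Real.sinh (α * (δ - t))) ^ 2) volume 0 δ :=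
    (((Real.continuous_sinh.comp (continuous_const.mul
      (continuous_const.sub continuous_id))).pow 2)).intervalIntegrable _ _
  rw [intervalIntegral.integral_eq_sub_of_hasDerivAt h hint]
  simp only [sub_self, mul_zero, sub_zero, Real.sinh_zero, Real.cosh_zero]
  field_simp
  ring

lemma IA (hδ : 0 < δ) :
    ∫ t in Set.Ioo (0:ℝ) δ, (deriv (fun t => Real.sinh (α * (δ - t))) t) ^ 2
      = α * (Real.sinh (α * δ) * Real.cosh (α * δ) + α * δ) / 2 := by
  rw [ioo_eq_interval δ hδ, testfun_deriv δ α]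
  have h : ∀ t ∈ Set.uIcc (0:ℝ) δ, HasDerivAt
      (fun t => -((α * (Real.sinh (α * (δ - t)) * Real.cosh (α * (δ - t)) + α * (δ - t))) / 2))
      ((-(α * Real.cosh (α * (δ - t)))) ^ 2) t := by
    intro t _
    have h1 := hasDerivAt_inner δ α t
    have h2 := (testfun_hasDeriv δ α t).mul (coshDeriv δ α t)
    have h3 := (((h2.add h1).const_mul α).div_const 2).neg
    refine h3.congr_deriv ?_
    have hc := Real.cosh_sq (α * (δ - t))
    field_simp
    nlinarith [hc]
  have hint : IntervalIntegrable (fun t => (-(α * Real.cosh (α * (δ - t)))) ^ 2) volume 0 δ := by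
    apply Continuous.intervalIntegrable
    exact ((continuous_const.mul (Real.continuous_cosh.comp (continuous_const.mul
      (continuous_const.sub continuous_id)))).neg).pow 2
  rw [intervalIntegral.integral_eq_sub_of_hasDerivAt h hint]
  simp only [sub_self, mul_zero, Real.sinh_zero, Real.cosh_zero, zero_mul, add_zero, zero_add,
    neg_zero, zero_sub, neg_neg]
  ring

/-- The Rayleigh quotient of the test function belongs to `Sset δ α 1`. -/
lemma test_mem (hδ : 0 < δ) (hα : 0 < α) :
    rq δ α (fun t => Real.sinh (α * (δ - t))) ∈ Sset δ α 1 := by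
  set f₀ : ℝ → ℝ := fun t => Real.sinh (α * (δ - t)) with hf₀
  have hne : f₀ ≠ 0 := by
    intro h
    have h0 : f₀ 0 = 0 := by rw [h]; rfl
    have : Real.sinh (α * (δ - 0)) = 0 := h0
    rw [sub_zero, Real.sinh_eq_zero] at this
    exact (mul_pos hα hδ).ne' this
  refine ⟨Submodule.span ℝ {f₀}, ?_, finrank_span_singleton hne, ?_⟩
  · intro f hf
    obtain ⟨c, rfl⟩ := Submodule.mem_span_singleton.mp hf
    constructor
    · have : (c • f₀) = fun t => c * f₀ t := by funext t; simp
      rw [this]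
      exact contDiff_const.mul (testfun_contDiff δ α)
    · simp [hf₀]
  · have himg : rq δ α '' {f | f ∈ Submodule.span ℝ {f₀} ∧ f ≠ 0} = {rq δ α f₀} := by
      ext y
      constructor
      · rintro ⟨f, ⟨hfG, hfne⟩, rfl⟩
        obtain ⟨c, rfl⟩ := Submodule.mem_span_singleton.mp hfG
        have hc : c ≠ 0 := by
          intro h; apply hfne; rw [h, zero_smul]
        exact rq_smul δ α hc (testfun_contDiff δ α)
      · rintro rfl
        exact ⟨f₀, ⟨Submodule.mem_span_singleton_self f₀, hne⟩, rfl⟩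
    rw [himg, csSup_singleton]

end test

/-- For the Robin–Dirichlet Laplacian `L_D` on `(0,δ)`, as `αδ → +∞` one has
`E₁(L_D) = −α²(1 + O(e^{−δα}))` and `E₂(L_D) ≥ 0`. -/
theorem stmt7 :
    ∃ C M : ℝ, 0 < C ∧ ∀ δ α : ℝ, 0 < δ → 0 < α → M ≤ α * δ →
      |LDev δ α 1 + α ^ 2| ≤ C * α ^ 2 * Real.exp (-(δ * α)) ∧
      0 ≤ LDev δ α 2 := by
  refine ⟨2, 2, by norm_num, fun δ α hδ hα hM => ?_⟩
  have h2 : 0 ≤ LDev δ α 2 := by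
    rw [LDev_eq]
    exact Real.sInf_nonneg fun v hv => Sset2_nonneg hv
  set x := α * δ with hx
  have hx0 : 0 < x := mul_pos hα hδ
  set S := Real.sinh x with hS
  set Ch := Real.cosh x with hCh
  have hxS : x ≤ S := Real.self_le_sinh_iff.mpr hx0.le
  have hS0 : 0 < S := lt_of_lt_of_le hx0 hxS
  have hCh1 : 1 < Ch := Real.one_lt_cosh.mpr hx0.ne'
  have hCh2 : 2 ≤ Ch := by
    have h1 : (2:ℝ) ≤ Real.exp 1 := by
      have := Real.add_one_le_exp 1; linarith
    have h4 : (4:ℝ) ≤ Real.exp x := by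
      calc (4:ℝ) = 2 * 2 := by norm_num
        _ ≤ Real.exp 1 * Real.exp 1 := by nlinarith [Real.exp_pos 1]
        _ = Real.exp 2 := by rw [← Real.exp_add]; norm_num
        _ ≤ Real.exp x := Real.exp_le_exp.mpr hM
    have hpos : 0 < Real.exp (-x) := Real.exp_pos _
    rw [hCh, Real.cosh_eq]
    linarith
  have hSC : x < S * Ch := by nlinarith
  have hExp : Ch - S = Real.exp (-x) := by
    rw [hCh, hS, Real.cosh_eq, Real.sinh_eq]; ring
  -- the Rayleigh quotient of the test function
  set q := rq δ α (fun t => Real.sinh (α * (δ - t))) with hq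
  have hB : (0:ℝ) < (S * Ch - x) / (2 * α) := by
    apply div_pos (by linarith) (by linarith)
  have hqval : q = (α * (S * Ch + x) / 2 - α * S ^ 2) / ((S * Ch - x) / (2 * α)) := by
    rw [hq, rq, IA hδ, IB hδ hα]
    simp only [sub_zero, ← hx, ← hS, ← hCh]
  have hq_add : q + α ^ 2 = α * S * (Ch - S) / ((S * Ch - x) / (2 * α)) := by
    rw [hqval, div_add' _ _ _ hB.ne', ]
    congr 1
    field_simp
    ring
  have hq_nonneg : 0 ≤ q + α ^ 2 := by
    rw [hq_add]
    apply div_nonneg _ hB.le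
    have : 0 ≤ Ch - S := by rw [hExp]; exact (Real.exp_pos _).le
    positivity
  have hq_le : q + α ^ 2 ≤ 2 * α ^ 2 * Real.exp (-x) := by
    rw [hq_add, hExp, div_le_iff₀ hB]
    have hkey : S ≤ S * Ch - x := by nlinarith
    have hpos : 0 < Real.exp (-x) := Real.exp_pos _
    have : 2 * α ^ 2 * Real.exp (-x) * ((S * Ch - x) / (2 * α))
        = α * Real.exp (-x) * (S * Ch - x) := by field_simp
    rw [this]
    nlinarith [mul_le_mul_of_nonneg_left hkey
      (by positivity : (0:ℝ) ≤ α * Real.exp (-x))]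
  -- lower and upper bounds for LDev δ α 1
  have hub : LDev δ α 1 ≤ q := by
    rw [LDev_eq]
    apply csInf_le ⟨-α ^ 2, fun v hv => Sset_lb hδ hv⟩ (test_mem hδ hα)
  have hlb : -α ^ 2 ≤ LDev δ α 1 := by
    rw [LDev_eq]
    exact le_csInf ⟨q, test_mem hδ hα⟩ fun v hv => Sset_lb hδ hv
  refine ⟨?_, h2⟩
  rw [abs_of_nonneg (by linarith), show -(δ * α) = -x by rw [hx]; ring]
  linarith
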